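/- Sufficient ascent of the GPM step: Under the generative model, suppose α > ‖A ∘ Δ‖ + ‖W − μ·1_n1_nᵀ‖. Then a₀ := λ_min(A ∘ Δ + (A − μ·1_{nd}1_{nd}ᵀ) ∘ G*G*ᵀ + α I_{nd}) > 0, and for every G ∈ O(d)^{⊗n} and every G⁺ ∈ T_α(G), one has f(G⁺) − f(G) ≥ a₀ · ‖G⁺ − G‖_F², where f(G) := tr(Gᵀ C G). -/

import Mathlib

open Matrix BigOperators

noncomputable section
namespace GroupSync

variable {n d : ℕ}

/-- Frobenius norm of a real matrix. -/
def frob {m k : Type*} [Fintype m] [Fintype k] (X : Matrix m k ℝ) : ℝ :=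
  Real.sqrt (∑ i, ∑ j, (X i j) ^ 2)

/-- Spectral (operator) norm of a real matrix: the operator norm of the induced
linear map between Euclidean spaces. -/
def spec {m k : Type*} [Fintype m] [Fintype k] [DecidableEq k] (X : Matrix m k ℝ) : ℝ :=
  ‖LinearMap.toContinuousLinearMap (Matrix.toEuclideanLin X)‖

/-- Nuclear norm: trace of the positive semidefinite square root of `X * Xᵀ`
(i.e. the sum of the singular values of `X`). -/
def nuclear {m k : Type*} [Fintype m] [Fintype k] [DecidableEq m] (X : Matrix m k ℝ) : ℝ :=
  ((Matrix.isHermitian_mul_conjTranspose_self X).eigenvectorUnitary.1 *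
    Matrix.diagonal (((↑) : ℝ → ℝ) ∘ (Real.sqrt ·) ∘
      (Matrix.isHermitian_mul_conjTranspose_self X).eigenvalues) *
    (star (Matrix.isHermitian_mul_conjTranspose_self X).eigenvectorUnitary : Matrix m m ℝ)).trace

/-- The positive semidefinite square root of `X * Xᵀ`. -/
def psdSqrtMulT {m k : Type*} [Fintype m] [Fintype k] [DecidableEq m] (X : Matrix m k ℝ) :
    Matrix m m ℝ :=
  ((Matrix.isHermitian_mul_conjTranspose_self X).eigenvectorUnitary.1 *
    Matrix.diagonal (((↑) : ℝ → ℝ) ∘ (Real.sqrt ·) ∘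
      (Matrix.isHermitian_mul_conjTranspose_self X).eigenvalues) *
    (star (Matrix.isHermitian_mul_conjTranspose_self X).eigenvectorUnitary : Matrix m m ℝ))

/-- Membership in the orthogonal group `O(d)`. -/
def IsOd (g : Matrix (Fin d) (Fin d) ℝ) : Prop :=
  gᵀ * g = 1 ∧ g * gᵀ = 1

/-- Membership in the special orthogonal group `SO(d)`. -/
def IsSOd (g : Matrix (Fin d) (Fin d) ℝ) : Prop :=
  IsOd g ∧ g.det = 1

/-- The `i`-th `d × d` block of an `nd × d` matrix. -/
def blk (X : Matrix (Fin n × Fin d) (Fin d) ℝ) (i : Fin n) : Matrix (Fin d) (Fin d) ℝ :=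
  Matrix.of fun a b => X (i, a) b

/-- Membership in `O(d)^{⊗n}`: every `d × d` block is orthogonal. -/
def OdN (G : Matrix (Fin n × Fin d) (Fin d) ℝ) : Prop :=
  ∀ i : Fin n, IsOd (blk G i)

/-- Membership in `SO(d)^{⊗n}`. -/
def SOdN (G : Matrix (Fin n × Fin d) (Fin d) ℝ) : Prop :=
  ∀ i : Fin n, IsSOd (blk G i)

/-- The `i`-th block column (an `nd × d` matrix) of an `nd × nd` matrix. -/
def bcol (M : Matrix (Fin n × Fin d) (Fin n × Fin d) ℝ) (i : Fin n) :
    Matrix (Fin n × Fin d) (Fin d) ℝ :=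
  Matrix.of fun p b => M p (i, b)

/-- The `ij`-th `d × d` block of an `nd × nd` matrix. -/
def dblk (M : Matrix (Fin n × Fin d) (Fin n × Fin d) ℝ) (i j : Fin n) :
    Matrix (Fin d) (Fin d) ℝ :=
  Matrix.of fun a b => M (i, a) (j, b)

/-- `G' ∈ T_α(G)` (where `Ct = C + α I`): `G' ∈ O(d)^{⊗n}` and each block `G'_i` is a
nearest point of `C̃ᵢᵀ G` in `O(d)` w.r.t. the Frobenius norm. -/
def InT (Ct : Matrix (Fin n × Fin d) (Fin n × Fin d) ℝ)
    (G G' : Matrix (Fin n × Fin d) (Fin d) ℝ) : Prop :=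
  OdN G' ∧ ∀ i : Fin n, ∀ X : Matrix (Fin d) (Fin d) ℝ, IsOd X →
    frob (blk G' i - (bcol Ct i)ᵀ * G) ≤ frob (X - (bcol Ct i)ᵀ * G)

/-- `G' ∈ ST_α(G)`: the `SO(d)` analogue of `InT`. -/
def InST (Ct : Matrix (Fin n × Fin d) (Fin n × Fin d) ℝ)
    (G G' : Matrix (Fin n × Fin d) (Fin d) ℝ) : Prop :=
  SOdN G' ∧ ∀ i : Fin n, ∀ X : Matrix (Fin d) (Fin d) ℝ, IsSOd X →
    frob (blk G' i - (bcol Ct i)ᵀ * G) ≤ frob (X - (bcol Ct i)ᵀ * G)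

/-- The quotient distance `d(X, Y) = min_{g ∈ O(d)} ‖X − Y g‖_F`. -/
def dOrth (X Y : Matrix (Fin n × Fin d) (Fin d) ℝ) : ℝ :=
  ⨅ g : {g : Matrix (Fin d) (Fin d) ℝ // IsOd g}, frob (X - Y * g.1)

/-- The objective function `f(G) = tr(Gᵀ C G)`. -/
def obj (C : Matrix (Fin n × Fin d) (Fin n × Fin d) ℝ)
    (G : Matrix (Fin n × Fin d) (Fin d) ℝ) : ℝ :=
  Matrix.trace (Gᵀ * C * G)

/-- Hadamard (entrywise) product. -/
def had {m k : Type*} (X Y : Matrix m k ℝ) : Matrix m k ℝ :=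
  Matrix.of fun p q => X p q * Y p q

/-- `W ⊗ (1_d 1_dᵀ)`, the Kronecker product of `W` with the all-ones `d × d` matrix. -/
def kron1 (W : Matrix (Fin n) (Fin n) ℝ) : Matrix (Fin n × Fin d) (Fin n × Fin d) ℝ :=
  Matrix.kroneckerMap (· * ·) W (Matrix.of fun (_ _ : Fin d) => (1 : ℝ))

/-- The all-ones matrix `1_m 1_mᵀ`. -/
def onesMat (m : Type*) : Matrix m m ℝ :=
  Matrix.of fun _ _ => (1 : ℝ)

/-- `symblockdiag`: symmetrize the diagonal `d × d` blocks, zero out all other blocks. -/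
def sbd (X : Matrix (Fin n × Fin d) (Fin n × Fin d) ℝ) :
    Matrix (Fin n × Fin d) (Fin n × Fin d) ℝ :=
  Matrix.of fun p q => if p.1 = q.1 then (X p q + X (p.1, q.2) (q.1, p.2)) / 2 else 0

/-- `S(G) = symblockdiag(C G Gᵀ) − C`. -/
def Smat (C : Matrix (Fin n × Fin d) (Fin n × Fin d) ℝ)
    (G : Matrix (Fin n × Fin d) (Fin d) ℝ) : Matrix (Fin n × Fin d) (Fin n × Fin d) ℝ :=
  sbd (C * (G * Gᵀ)) - C

/-- `G` is a second-order critical point of (QP): `S(G) G = 0` and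
`⟨H, S(G) H⟩ ≥ 0` for all tangent directions `H` (blockwise `Hᵢ Gᵢᵀ` skew-symmetric). -/
def IsSOC (C : Matrix (Fin n × Fin d) (Fin n × Fin d) ℝ)
    (G : Matrix (Fin n × Fin d) (Fin d) ℝ) : Prop :=
  Smat C G * G = 0 ∧
  ∀ H : Matrix (Fin n × Fin d) (Fin d) ℝ,
    (∀ i : Fin n, (blk H i * (blk G i)ᵀ)ᵀ = -(blk H i * (blk G i)ᵀ)) →
    0 ≤ Matrix.trace (Hᵀ * (Smat C G * H))

/-- Smallest singular value of a square matrix, as the minimum of `‖M v‖` over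
unit vectors `v`. -/
def sigmaMin (M : Matrix (Fin d) (Fin d) ℝ) : ℝ :=
  ⨅ v : {v : Fin d → ℝ // ∑ a, (v a) ^ 2 = 1}, Real.sqrt (∑ a, (M.mulVec v.1 a) ^ 2)

/-- The singular values of a square matrix: square roots of the eigenvalues of `Mᵀ M`. -/
def singVal (M : Matrix (Fin d) (Fin d) ℝ) (l : Fin d) : ℝ :=
  Real.sqrt ((Matrix.isHermitian_conjTranspose_mul_self M).eigenvalues l)

/-- Smallest eigenvalue of a (symmetric) matrix, as the minimum Rayleigh quotient
over unit vectors. -/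
def lambdaMin {m : Type*} [Fintype m] (M : Matrix m m ℝ) : ℝ :=
  ⨅ v : {v : m → ℝ // ∑ i, (v i) ^ 2 = 1}, v.1 ⬝ᵥ M.mulVec v.1

/-- `D_α(G)`: block diagonal of the psd square roots of `(C̃ᵢᵀ G)(C̃ᵢᵀ G)ᵀ`, minus `C̃`. -/
def Dmat (Ct : Matrix (Fin n × Fin d) (Fin n × Fin d) ℝ)
    (G : Matrix (Fin n × Fin d) (Fin d) ℝ) : Matrix (Fin n × Fin d) (Fin n × Fin d) ℝ :=
  (Matrix.of fun p q =>
    if p.1 = q.1 then psdSqrtMulT ((bcol Ct p.1)ᵀ * G) p.2 q.2 else 0) - Ct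

/-- The residual function `ρ_α(G) = ‖D_α(G) G‖_F`. -/
def rho (Ct : Matrix (Fin n × Fin d) (Fin n × Fin d) ℝ)
    (G : Matrix (Fin n × Fin d) (Fin d) ℝ) : ℝ :=
  frob (Dmat Ct G * G)

/-- Blockwise infinity norm: `‖X‖_∞ = max_i ‖X_i‖` (spectral norm of the blocks). -/
def binf (X : Matrix (Fin n × Fin d) (Fin d) ℝ) : ℝ :=
  ⨆ i : Fin n, spec (blk X i)

/-! ### Auxiliary lemmas -/

lemma frob_sq {m k : Type*} [Fintype m] [Fintype k] (X : Matrix m k ℝ) :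
    frob X ^ 2 = ∑ i, ∑ j, (X i j) ^ 2 :=
  Real.sq_sqrt (by positivity)

lemma frob_nonneg {m k : Type*} [Fintype m] [Fintype k] (X : Matrix m k ℝ) :
    0 ≤ frob X := Real.sqrt_nonneg _

lemma abs_rayleigh_le_spec {m : Type*} [Fintype m] [DecidableEq m]
    (X : Matrix m m ℝ) (v : m → ℝ) :
    |v ⬝ᵥ X.mulVec v| ≤ spec X * ∑ i, (v i) ^ 2 := by
  have h1 : v ⬝ᵥ X.mulVec v =
      (inner ℝ ((WithLp.equiv 2 (m → ℝ)).symm v)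
        ((Matrix.toEuclideanLin X) ((WithLp.equiv 2 (m → ℝ)).symm v)) : ℝ) := by
    rw [Matrix.toEuclideanLin_apply, PiLp.inner_apply]
    simp [dotProduct, Matrix.mulVec, mul_comm]
  have h2 : ‖(WithLp.equiv 2 (m → ℝ)).symm v‖ ^ 2 = ∑ i, (v i) ^ 2 := by
    rw [EuclideanSpace.norm_eq, Real.sq_sqrt (by positivity)]
    simp [sq_abs]
  set w := (WithLp.equiv 2 (m → ℝ)).symm v
  calc |v ⬝ᵥ X.mulVec v| = |(inner ℝ w ((Matrix.toEuclideanLin X) w) : ℝ)| := by rw [h1]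
    _ ≤ ‖w‖ * ‖(Matrix.toEuclideanLin X) w‖ := abs_real_inner_le_norm _ _
    _ ≤ ‖w‖ * (spec X * ‖w‖) := by
        apply mul_le_mul_of_nonneg_left _ (norm_nonneg _)
        exact (LinearMap.toContinuousLinearMap (Matrix.toEuclideanLin X)).le_opNorm w
    _ = spec X * ‖w‖ ^ 2 := by ring
    _ = spec X * ∑ i, (v i) ^ 2 := by rw [h2]

lemma bdd_rayleigh {m : Type*} [Fintype m] [DecidableEq m] (M : Matrix m m ℝ) :
    BddBelow (Set.range fun v : {v : m → ℝ // ∑ i, (v i) ^ 2 = 1} => v.1 ⬝ᵥ M.mulVec v.1) := by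
  refine ⟨-spec M, ?_⟩
  rintro x ⟨⟨v, hv⟩, rfl⟩
  have := abs_rayleigh_le_spec M v
  rw [hv, mul_one] at this
  linarith [neg_abs_le (v ⬝ᵥ M.mulVec v)]

lemma lambdaMin_le {m : Type*} [Fintype m] [DecidableEq m] (M : Matrix m m ℝ)
    (v : m → ℝ) (hv : ∑ i, (v i) ^ 2 = 1) :
    lambdaMin M ≤ v ⬝ᵥ M.mulVec v :=
  ciInf_le (bdd_rayleigh M) ⟨v, hv⟩

lemma le_lambdaMin {m : Type*} [Fintype m] [Nonempty m] [DecidableEq m] (M : Matrix m m ℝ)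
    (c : ℝ) (h : ∀ v : m → ℝ, ∑ i, (v i) ^ 2 = 1 → c ≤ v ⬝ᵥ M.mulVec v) :
    c ≤ lambdaMin M := by
  have hne : Nonempty {v : m → ℝ // ∑ i, (v i) ^ 2 = 1} := by
    refine ⟨⟨Pi.single (Classical.arbitrary m) 1, ?_⟩⟩
    rw [Finset.sum_eq_single (Classical.arbitrary m)]
    · simp
    · intro b _ hb; simp [Pi.single_apply, hb]
    · simp
  exact le_ciInf fun v => h v.1 v.2

lemma rayleigh_ge_lambdaMin {m : Type*} [Fintype m] [DecidableEq m] (M : Matrix m m ℝ)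
    (v : m → ℝ) : lambdaMin M * ∑ i, (v i) ^ 2 ≤ v ⬝ᵥ M.mulVec v := by
  rcases eq_or_lt_of_le (show (0:ℝ) ≤ ∑ i, (v i) ^ 2 by positivity) with h0 | h0
  · have hv : ∀ i, v i = 0 := by
      intro i
      have hnn : ∀ j ∈ Finset.univ, (0:ℝ) ≤ (v j) ^ 2 := fun j _ => sq_nonneg _
      have := (Finset.sum_eq_zero_iff_of_nonneg hnn).mp h0.symm i (Finset.mem_univ i)
      exact pow_eq_zero_iff two_ne_zero |>.mp this
    have : v = 0 := funext hv
    simp [this, ← h0]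
  · set s := ∑ i, (v i) ^ 2
    set u : m → ℝ := fun i => v i / Real.sqrt s with hu
    have hs : Real.sqrt s ^ 2 = s := Real.sq_sqrt h0.le
    have hsp : 0 < Real.sqrt s := Real.sqrt_pos.mpr h0
    have hu1 : ∑ i, (u i) ^ 2 = 1 := by
      simp only [hu, div_pow, ← Finset.sum_div, hs]
      exact div_self h0.ne'
    have key := lambdaMin_le M u hu1
    have hv : v = Real.sqrt s • u := by
      funext i
      simp only [hu, Pi.smul_apply, smul_eq_mul]
      field_simp
    have huv : v ⬝ᵥ M.mulVec v = s * (u ⬝ᵥ M.mulVec u) := by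
      rw [hv, Matrix.mulVec_smul, smul_dotProduct, dotProduct_smul]
      simp only [smul_eq_mul]
      rw [← mul_assoc, ← sq, hs]
    rw [huv, mul_comm (lambdaMin M) s]
    exact mul_le_mul_of_nonneg_left key h0.le

lemma ortho_rows (Gs : Matrix (Fin n × Fin d) (Fin d) ℝ) (hGs : OdN Gs) (i : Fin n)
    (a b : Fin d) : ∑ c, Gs (i, a) c * Gs (i, b) c = if a = b then 1 else 0 := by
  have h := (hGs i).2
  have := congrArg (fun M => M a b) h
  simpa [Matrix.mul_apply, blk, Matrix.one_apply] using this

lemma block_rayleigh_lower (B : Matrix (Fin n) (Fin n) ℝ)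
    (Gs : Matrix (Fin n × Fin d) (Fin d) ℝ) (hGs : OdN Gs)
    (v : Fin n × Fin d → ℝ) :
    -(spec B * ∑ p, (v p) ^ 2) ≤ v ⬝ᵥ (had (kron1 B) (Gs * Gsᵀ)).mulVec v := by
  set u : Fin d → Fin n → ℝ := fun c i => ∑ a, v (i, a) * Gs (i, a) c with hu
  have claim1 : v ⬝ᵥ (had (kron1 B) (Gs * Gsᵀ)).mulVec v
      = ∑ c, (u c) ⬝ᵥ B.mulVec (u c) := by
    have lhs : v ⬝ᵥ (had (kron1 B) (Gs * Gsᵀ)).mulVec v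
        = ∑ p, ∑ q, ∑ c, v p * B p.1 q.1 * Gs p c * Gs q c * v q := by
      simp only [dotProduct, Matrix.mulVec, had, kron1, Matrix.kroneckerMap,
        Matrix.mul_apply, Matrix.transpose_apply, Matrix.of_apply]
      refine Finset.sum_congr rfl fun p _ => ?_
      rw [Finset.mul_sum]
      refine Finset.sum_congr rfl fun q _ => ?_
      rw [mul_one, Finset.mul_sum, Finset.sum_mul, Finset.mul_sum]
      refine Finset.sum_congr rfl fun c _ => ?_
      ring
    have rhs : ∑ c, (u c) ⬝ᵥ B.mulVec (u c)
        = ∑ c, ∑ p : Fin n × Fin d, ∑ q : Fin n × Fin d,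
            v p * B p.1 q.1 * Gs p c * Gs q c * v q := by
      refine Finset.sum_congr rfl fun c _ => ?_
      simp only [dotProduct, Matrix.mulVec, hu, Fintype.sum_prod_type]
      refine Finset.sum_congr rfl fun i _ => ?_
      rw [Finset.sum_mul]
      refine Finset.sum_congr rfl fun a _ => ?_
      rw [Finset.mul_sum]
      refine Finset.sum_congr rfl fun j _ => ?_
      rw [Finset.mul_sum, Finset.mul_sum]
      refine Finset.sum_congr rfl fun b _ => ?_
      ring
    rw [lhs, rhs]
    exact (Finset.sum_congr rfl fun p _ => Finset.sum_comm).trans Finset.sum_comm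
  have claim2 : ∑ c, ∑ i, (u c i) ^ 2 = ∑ p, (v p) ^ 2 := by
    rw [Finset.sum_comm]
    rw [Fintype.sum_prod_type]
    refine Finset.sum_congr rfl fun i _ => ?_
    have e1 : ∀ c : Fin d, (u c i) ^ 2
        = ∑ a, ∑ b, v (i, a) * v (i, b) * (Gs (i, a) c * Gs (i, b) c) := by
      intro c
      rw [sq, hu]
      simp only []
      rw [Finset.sum_mul]
      refine Finset.sum_congr rfl fun a _ => ?_
      rw [Finset.mul_sum]
      refine Finset.sum_congr rfl fun b _ => ?_
      ring
    simp only [e1]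
    rw [Finset.sum_comm]
    have e2 : ∀ a : Fin d, ∑ c, ∑ b, v (i, a) * v (i, b) * (Gs (i, a) c * Gs (i, b) c)
        = (v (i, a)) ^ 2 := by
      intro a
      rw [Finset.sum_comm]
      have e3 : ∀ b : Fin d, ∑ c, v (i, a) * v (i, b) * (Gs (i, a) c * Gs (i, b) c)
          = v (i, a) * v (i, b) * (if a = b then 1 else 0) := by
        intro b
        rw [← Finset.mul_sum, ortho_rows Gs hGs i a b]
      simp only [e3]
      rw [Finset.sum_eq_single a]
      · simp [sq]
      · intro b _ hb; simp [Ne.symm hb]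
      · simp
    simp only [e2]
  rw [claim1]
  calc -(spec B * ∑ p, (v p) ^ 2) = ∑ c, -(spec B * ∑ i, (u c i) ^ 2) := by
        rw [← claim2, Finset.mul_sum, ← Finset.sum_neg_distrib]
    _ ≤ ∑ c, (u c) ⬝ᵥ B.mulVec (u c) := by
        refine Finset.sum_le_sum fun c _ => ?_
        have := abs_rayleigh_le_spec B (u c)
        linarith [neg_abs_le ((u c) ⬝ᵥ B.mulVec (u c))]

lemma sum_sq_ortho {g : Matrix (Fin d) (Fin d) ℝ} (hg : IsOd g) :
    ∑ a, ∑ b, (g a b) ^ 2 = (d : ℝ) := by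
  have : ∀ a : Fin d, ∑ b, (g a b) ^ 2 = 1 := by
    intro a
    have := congrArg (fun M => M a a) hg.2
    simpa [Matrix.mul_apply, Matrix.one_apply, sq] using this
  simp [this]

lemma trace_quadratic {m k : Type*} [Fintype m] [Fintype k]
    (N : Matrix m m ℝ) (X : Matrix m k ℝ) :
    Matrix.trace (Xᵀ * N * X) = ∑ b, (fun p => X p b) ⬝ᵥ N.mulVec (fun p => X p b) := by
  simp only [Matrix.trace, Matrix.diag, Matrix.mul_apply, Matrix.transpose_apply,
    dotProduct, Matrix.mulVec]
  refine Finset.sum_congr rfl fun b _ => ?_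
  calc ∑ p, (∑ q, X q b * N q p) * X p b
      = ∑ p, ∑ q, X q b * N q p * X p b := by
        refine Finset.sum_congr rfl fun p _ => ?_; rw [Finset.sum_mul]
    _ = ∑ q, ∑ p, X q b * N q p * X p b := Finset.sum_comm
    _ = ∑ q, X q b * ∑ p, N q p * X p b := by
        refine Finset.sum_congr rfl fun q _ => ?_
        rw [Finset.mul_sum]
        exact Finset.sum_congr rfl fun p _ => by ring

lemma trace_tm {m k : Type*} [Fintype m] [Fintype k] (Y : Matrix m k ℝ) :
    Matrix.trace (Yᵀ * Y) = ∑ b, ∑ p, (Y p b) ^ 2 := by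
  simp [Matrix.trace, Matrix.diag, Matrix.mul_apply, sq]

lemma trace_form (Ct : Matrix (Fin n × Fin d) (Fin n × Fin d) ℝ) (hs : Ctᵀ = Ct)
    (G X : Matrix (Fin n × Fin d) (Fin d) ℝ) :
    Matrix.trace (Xᵀ * Ct * G)
      = ∑ i, ∑ a, ∑ b, blk X i a b * ((bcol Ct i)ᵀ * G) a b := by
  have hsym : ∀ p q, Ct q p = Ct p q := fun p q => congrFun (congrFun hs p) q
  simp only [Matrix.trace, Matrix.diag, Matrix.mul_apply, Matrix.transpose_apply,
    blk, bcol, Matrix.of_apply]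
  calc ∑ b, ∑ p, (∑ q, X q b * Ct q p) * G p b
      = ∑ b, ∑ p, ∑ q, X q b * Ct q p * G p b := by
        refine Finset.sum_congr rfl fun b _ => Finset.sum_congr rfl fun p _ => ?_
        rw [Finset.sum_mul]
    _ = ∑ q : Fin n × Fin d, ∑ b, ∑ p, X q b * Ct q p * G p b :=
        (Finset.sum_congr rfl fun b _ => Finset.sum_comm).trans Finset.sum_comm
    _ = ∑ q : Fin n × Fin d, ∑ b, X q b * ∑ p, Ct p q * G p b := by
        refine Finset.sum_congr rfl fun q _ => Finset.sum_congr rfl fun b _ => ?_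
        rw [Finset.mul_sum]
        refine Finset.sum_congr rfl fun p _ => ?_
        rw [hsym p q]; ring
    _ = ∑ i, ∑ a, ∑ b, X (i, a) b * ∑ p, Ct p (i, a) * G p b :=
        Fintype.sum_prod_type (f := fun q : Fin n × Fin d => ∑ b, X q b * ∑ p, Ct p q * G p b)

lemma trace_odn {X : Matrix (Fin n × Fin d) (Fin d) ℝ} (hX : OdN X) :
    Matrix.trace (Xᵀ * X) = (n : ℝ) * d := by
  rw [trace_tm]
  have : ∀ b : Fin d, ∑ p : Fin n × Fin d, (X p b) ^ 2 = (n : ℝ) := by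
    intro b
    rw [Fintype.sum_prod_type]
    have : ∀ i : Fin n, ∑ a, (X (i, a) b) ^ 2 = 1 := by
      intro i
      have := congrArg (fun M => M b b) (hX i).1
      simpa [Matrix.mul_apply, Matrix.one_apply, blk, sq] using this
    simp [this]
  simp [this, mul_comm]

lemma sum_sq_sub (P B : Matrix (Fin d) (Fin d) ℝ) :
    ∑ a, ∑ b, ((P - B) a b) ^ 2
      = (∑ a, ∑ b, (P a b) ^ 2) - 2 * (∑ a, ∑ b, P a b * B a b)
        + ∑ a, ∑ b, (B a b) ^ 2 := by
  simp only [Matrix.sub_apply, sub_sq, mul_assoc, Finset.sum_add_distrib,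
    Finset.sum_sub_distrib, ← Finset.mul_sum]

/-- sufficient ascent of the GPM step.
Under the generative model (with `n, d ≥ 1`), suppose
`α > ‖A ∘ Δ‖ + ‖W − μ·1_n1_nᵀ‖`. Then
`a₀ := λ_min(A ∘ Δ + (A − μ·1 1ᵀ) ∘ G*G*ᵀ + α I) > 0`, and for every
`G ∈ O(d)^{⊗n}` and every `G⁺ ∈ T_α(G)`, `f(G⁺) − f(G) ≥ a₀ ‖G⁺ − G‖_F²`. -/
theorem sufficient_ascent {n d : ℕ} (hn : 0 < n) (hd : 0 < d)
    (W : Matrix (Fin n) (Fin n) ℝ) (hW : Wᵀ = W)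
    (μ : ℝ) (hμ : 0 < μ) (hWdiag : ∀ i : Fin n, W i i = μ)
    (Gs : Matrix (Fin n × Fin d) (Fin d) ℝ) (hGs : OdN Gs)
    (Δ : Matrix (Fin n × Fin d) (Fin n × Fin d) ℝ) (hΔ : Δᵀ = Δ)
    (hΔdiag : ∀ i : Fin n, dblk Δ i i = 0)
    (A C : Matrix (Fin n × Fin d) (Fin n × Fin d) ℝ)
    (hA : A = kron1 W) (hC : C = had A (Gs * Gsᵀ + Δ))
    (α : ℝ) (hα : spec (had A Δ) + spec (W - μ • onesMat (Fin n)) < α)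
    (Ct : Matrix (Fin n × Fin d) (Fin n × Fin d) ℝ)
    (hCt : Ct = C + α • (1 : Matrix (Fin n × Fin d) (Fin n × Fin d) ℝ))
    (a₀ : ℝ)
    (ha₀ : a₀ = lambdaMin (had A Δ + had (A - μ • onesMat (Fin n × Fin d)) (Gs * Gsᵀ) +
      α • (1 : Matrix (Fin n × Fin d) (Fin n × Fin d) ℝ))) :
    0 < a₀ ∧
    ∀ G Gp : Matrix (Fin n × Fin d) (Fin d) ℝ, OdN G → InT Ct G Gp →
      a₀ * frob (Gp - G) ^ 2 ≤ obj C Gp - obj C G := by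
  have hne : Nonempty (Fin n × Fin d) := ⟨(⟨0, hn⟩, ⟨0, hd⟩)⟩
  set Mt := had A Δ + had (A - μ • onesMat (Fin n × Fin d)) (Gs * Gsᵀ) +
      α • (1 : Matrix (Fin n × Fin d) (Fin n × Fin d) ℝ) with hMt
  have hhd : had (A - μ • onesMat (Fin n × Fin d)) (Gs * Gsᵀ)
      = had (kron1 (W - μ • onesMat (Fin n))) (Gs * Gsᵀ) := by
    ext p q
    simp only [had, kron1, onesMat, hA, Matrix.sub_apply, Matrix.kroneckerMap_apply,
      Matrix.of_apply, Matrix.smul_apply, smul_eq_mul]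
    ring
  have hsplit : ∀ v : Fin n × Fin d → ℝ,
      v ⬝ᵥ Mt.mulVec v = v ⬝ᵥ (had A Δ).mulVec v
        + v ⬝ᵥ (had (kron1 (W - μ • onesMat (Fin n))) (Gs * Gsᵀ)).mulVec v
        + α * ∑ p, (v p) ^ 2 := by
    intro v
    rw [hMt, hhd]
    simp only [Matrix.add_mulVec, dotProduct_add, Matrix.smul_mulVec,
      Matrix.one_mulVec, dotProduct_smul, smul_eq_mul]
    congr 1
    simp [dotProduct, sq]
  have ha₀pos : 0 < a₀ := by
    rw [ha₀]
    have hle : α - spec (had A Δ) - spec (W - μ • onesMat (Fin n)) ≤ lambdaMin Mt := by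
      apply le_lambdaMin
      intro v hv
      have h1 := abs_rayleigh_le_spec (had A Δ) v
      rw [hv, mul_one] at h1
      have h2 := block_rayleigh_lower (W - μ • onesMat (Fin n)) Gs hGs v
      rw [hv, mul_one] at h2
      rw [hsplit v, hv, mul_one]
      have h3 := neg_abs_le (v ⬝ᵥ (had A Δ).mulVec v)
      linarith
    have h0 : 0 < α - spec (had A Δ) - spec (W - μ • onesMat (Fin n)) := by linarith
    linarith
  refine ⟨ha₀pos, ?_⟩
  intro G Gp hG hT
  obtain ⟨hGp, hmin⟩ := hT
  set D := Gp - G with hD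
  have hCts : Ctᵀ = Ct := by
    ext p q
    have hWs : W q.1 p.1 = W p.1 q.1 := congrFun (congrFun hW p.1) q.1
    have hΔs : Δ q p = Δ p q := congrFun (congrFun hΔ p) q
    simp only [hCt, hC, hA, Matrix.transpose_apply, Matrix.add_apply, had, kron1,
      Matrix.kroneckerMap_apply, Matrix.of_apply, Matrix.smul_apply, Matrix.one_apply,
      Matrix.mul_apply, Matrix.transpose_apply, smul_eq_mul]
    rw [hWs, hΔs]
    have hmc : ∑ c, Gs q c * Gs p c = ∑ c, Gs p c * Gs q c :=
      Finset.sum_congr rfl fun c _ => mul_comm _ _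
    rw [hmc]
    by_cases hpq : p = q
    · simp [hpq]
    · simp [hpq, Ne.symm hpq]
  have hdecomp : Ct = Mt + μ • (Gs * Gsᵀ) := by
    ext p q
    simp only [hCt, hC, hA, hMt, Matrix.add_apply, Matrix.smul_apply, had, kron1,
      Matrix.kroneckerMap_apply, Matrix.of_apply, Matrix.sub_apply, onesMat,
      smul_eq_mul]
    ring
  have hBle : Matrix.trace (Gᵀ * Ct * G) ≤ Matrix.trace (Gpᵀ * Ct * G) := by
    rw [trace_form Ct hCts G G, trace_form Ct hCts G Gp]
    refine Finset.sum_le_sum fun i _ => ?_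
    have h := hmin i (blk G i) (hG i)
    have h2 : frob (blk Gp i - (bcol Ct i)ᵀ * G) ^ 2
        ≤ frob (blk G i - (bcol Ct i)ᵀ * G) ^ 2 :=
      pow_le_pow_left₀ (frob_nonneg _) h 2
    rw [frob_sq, frob_sq, sum_sq_sub, sum_sq_sub] at h2
    rw [sum_sq_ortho (hGp i), sum_sq_ortho (hG i)] at h2
    linarith
  have hGpGD : Gp = G + D := by rw [hD]; abel
  have hsw : Matrix.trace (Gᵀ * Ct * D) = Matrix.trace (Dᵀ * Ct * G) := by
    have e : (Gᵀ * Ct * D)ᵀ = Dᵀ * Ct * G := by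
      rw [Matrix.transpose_mul, Matrix.transpose_mul, Matrix.transpose_transpose, hCts,
        Matrix.mul_assoc]
    rw [← e, Matrix.trace_transpose]
  have key : ∀ X : Matrix (Fin n × Fin d) (Fin d) ℝ, OdN X →
      Matrix.trace (Xᵀ * Ct * X) = obj C X + α * ((n : ℝ) * d) := by
    intro X hX
    rw [hCt, obj]
    rw [Matrix.mul_add, Matrix.mul_smul, Matrix.mul_one, Matrix.add_mul,
      Matrix.smul_mul, Matrix.trace_add, Matrix.trace_smul, trace_odn hX, smul_eq_mul]
  have hbig : Matrix.trace (Gpᵀ * Ct * Gp)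
      = Matrix.trace (Gᵀ * Ct * G) + Matrix.trace (Dᵀ * Ct * D)
        + 2 * Matrix.trace (Dᵀ * Ct * G) := by
    rw [hGpGD]
    simp only [Matrix.transpose_add, Matrix.add_mul, Matrix.mul_add, Matrix.trace_add]
    rw [hsw]
    ring
  have hexp : obj C Gp - obj C G
      = Matrix.trace (Dᵀ * Ct * D) + 2 * Matrix.trace (Dᵀ * Ct * G) := by
    have h1 := key G hG
    have h2 := key Gp hGp
    rw [h1, h2] at hbig
    linarith
  have hquadM : a₀ * frob D ^ 2 ≤ Matrix.trace (Dᵀ * Mt * D) := by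
    rw [ha₀, trace_quadratic, frob_sq]
    rw [show (∑ p, ∑ b, (D p b) ^ 2) = ∑ b, ∑ p : Fin n × Fin d, (D p b) ^ 2 from
      Finset.sum_comm, Finset.mul_sum]
    exact Finset.sum_le_sum fun b _ => rayleigh_ge_lambdaMin Mt _
  have hpsd : 0 ≤ Matrix.trace (Dᵀ * (Gs * Gsᵀ) * D) := by
    have e : Dᵀ * (Gs * Gsᵀ) * D = (Gsᵀ * D)ᵀ * (Gsᵀ * D) := by
      rw [Matrix.transpose_mul, Matrix.transpose_transpose]
      simp only [Matrix.mul_assoc]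
    rw [e, trace_tm]
    positivity
  have hsplitCt : Matrix.trace (Dᵀ * Ct * D)
      = Matrix.trace (Dᵀ * Mt * D) + μ * Matrix.trace (Dᵀ * (Gs * Gsᵀ) * D) := by
    rw [hdecomp]
    rw [Matrix.mul_add, Matrix.add_mul, Matrix.trace_add, Matrix.mul_smul,
      Matrix.smul_mul, Matrix.trace_smul, smul_eq_mul]
  have hDge : 0 ≤ Matrix.trace (Dᵀ * Ct * G) := by
    have e : Dᵀ * Ct * G = Gpᵀ * Ct * G - Gᵀ * Ct * G := by
      rw [hD, Matrix.transpose_sub, Matrix.sub_mul, Matrix.sub_mul]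
    rw [e, Matrix.trace_sub]
    linarith
  rw [hexp]
  have hμpsd : 0 ≤ μ * Matrix.trace (Dᵀ * (Gs * Gsᵀ) * D) := mul_nonneg hμ.le hpsd
  linarith

end GroupSync
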